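/- arXiv:2107.06730 — 2 statements merged into one kernel-verified Lean document; each statement's English description precedes it below -/
import Mathlib

section
/- Let X and Y be metric spaces in which every closed bounded set is compact (boundedly compact metric spaces), let f : X → Y be a continuous map, and let U ⊆ X be a dense subset. Assume that for every sequence (u_j) with u_j ∈ U for all j which is escaping in X (i.e., for every compact set K ⊆ X there exists j₀ such that u_j ∉ K for all j ≥ j₀), the image sequence (f(u_j)) is escaping in Y. Then f is a proper map, i.e., the preimage f⁻¹(K) of every compact set K ⊆ Y is compact. -/
/-- If `X` and `Y` are boundedly compact metric spaces (every closed bounded set is compact),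
`f : X → Y` is continuous, `U ⊆ X` is dense, and every escaping sequence contained in `U` has
escaping image under `f`, then `f` is proper: preimages of compact sets are compact. -/
theorem properness_from_dense_subset
    {X Y : Type*} [MetricSpace X] [MetricSpace Y]
    (hX : ∀ s : Set X, IsClosed s → Bornology.IsBounded s → IsCompact s)
    (hY : ∀ s : Set Y, IsClosed s → Bornology.IsBounded s → IsCompact s)
    (f : X → Y) (hf : Continuous f)
    (U : Set X) (hU : Dense U)
    (hesc : ∀ u : ℕ → X, (∀ j, u j ∈ U) →
      (∀ K : Set X, IsCompact K → ∃ j₀ : ℕ, ∀ j ≥ j₀, u j ∉ K) →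
      (∀ K : Set Y, IsCompact K → ∃ j₀ : ℕ, ∀ j ≥ j₀, f (u j) ∉ K)) :
    ∀ K : Set Y, IsCompact K → IsCompact (f ⁻¹' K) := by
  intro K hK
  have hcl : IsClosed (f ⁻¹' K) := hK.isClosed.preimage hf
  apply hX _ hcl
  by_contra hb
  have hne : (f ⁻¹' K).Nonempty := by
    rcases Set.eq_empty_or_nonempty (f ⁻¹' K) with h | h
    · exact absurd (h ▸ Bornology.isBounded_empty) hb
    · exact h
  obtain ⟨x₀, hx₀⟩ := hne
  have hx : ∀ j : ℕ, ∃ x, x ∈ f ⁻¹' K ∧ (j : ℝ) < dist x₀ x := by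
    intro j
    by_contra h
    push_neg at h
    refine hb ((Metric.isBounded_closedBall (x := x₀) (r := j)).subset ?_)
    intro x hxm
    exact Metric.mem_closedBall.mpr (by rw [dist_comm]; exact h x hxm)
  choose x hxK hxd using hx
  have hnear : ∀ j : ℕ, ∃ u ∈ U, u ∈ Metric.ball (x j) 1 ∩ f ⁻¹' Metric.ball (f (x j)) 1 := by
    intro j
    refine hU.exists_mem_open (IsOpen.inter Metric.isOpen_ball
      (Metric.isOpen_ball.preimage hf)) ⟨x j, ?_⟩
    constructor <;> simp
  choose u huU humem using hnear
  have hud : ∀ j, dist (u j) (x j) < 1 := fun j => (humem j).1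
  have hufd : ∀ j, dist (f (u j)) (f (x j)) < 1 := fun j => (humem j).2
  have huesc : ∀ K' : Set X, IsCompact K' → ∃ j₀ : ℕ, ∀ j ≥ j₀, u j ∉ K' := by
    intro K' hK'
    obtain ⟨r, hr⟩ := hK'.isBounded.subset_closedBall x₀
    refine ⟨⌈r⌉₊ + 2, fun j hj hmem => ?_⟩
    have h1 : dist x₀ (u j) ≤ r := by
      rw [dist_comm]; exact Metric.mem_closedBall.mp (hr hmem)
    have h2 : (j : ℝ) < dist x₀ (x j) := hxd j
    have h3 : dist x₀ (x j) ≤ dist x₀ (u j) + dist (u j) (x j) := dist_triangle _ _ _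
    have hjr : r + 1 ≤ (j : ℝ) := by
      have : (⌈r⌉₊ : ℝ) + 2 ≤ (j : ℝ) := by exact_mod_cast hj
      have := Nat.le_ceil r
      linarith
    linarith [hud j]
  have hcth : IsCompact (Metric.cthickening 1 K) :=
    hY _ Metric.isClosed_cthickening (hK.isBounded.cthickening)
  obtain ⟨j₀, hj₀⟩ := hesc u huU huesc _ hcth
  refine hj₀ j₀ le_rfl ?_
  refine Metric.thickening_subset_cthickening _ _ ?_
  rw [Metric.mem_thickening_iff]
  exact ⟨f (x j₀), hxK j₀, hufd j₀⟩
end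

section
/- For every η ∈ ℝ, the rotation R_η : ℝ⁵ → ℝ⁵ defined by R_η(x, y, z, v, w) = (x cos η + y sin η, y cos η − x sin η, z, v cos η + w sin η, w cos η − v sin η) is an isometry of the sub-Riemannian distance d_C, i.e., d_C(R_η p, R_η q) = d_C(p, q) for all p, q ∈ ℝ⁵, and R_η preserves the functions z and V: z(R_η p) = z(p) and V(R_η p) = V(p) for all p ∈ ℝ⁵. -/
open MeasureTheory Set

noncomputable section

/-- The Cartan group as `ℝ⁵` with coordinates `(x, y, z, v, w)`. -/
abbrev P5 : Type := ℝ × ℝ × ℝ × ℝ × ℝ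

def x5 (p : P5) : ℝ := p.1
def y5 (p : P5) : ℝ := p.2.1
def z5 (p : P5) : ℝ := p.2.2.1
def v5 (p : P5) : ℝ := p.2.2.2.1
def w5 (p : P5) : ℝ := p.2.2.2.2

/-- The function `V = x·v + y·w − (x² + y²)·z/2` on the Cartan group. -/
def VC (p : P5) : ℝ :=
  x5 p * v5 p + y5 p * w5 p - (x5 p ^ 2 + y5 p ^ 2) * z5 p / 2

/-- A curve `q` is horizontal on the parameter set `I ⊆ ℝ` for the Cartan structure if it is
Lipschitz on `I` and for almost every `t ∈ I` the derivatives of the coordinates satisfy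
`z' = (−x'·y + y'·x)/2`, `v' = y'·(x² + y²)/2`, `w' = −x'·(x² + y²)/2`. -/
def CartanHorizOn (I : Set ℝ) (q : ℝ → P5) : Prop :=
  (∃ K : NNReal, LipschitzOnWith K q I) ∧
  ∀ᵐ t ∂(volume.restrict I),
    derivWithin (fun s => z5 (q s)) I t
      = (-(derivWithin (fun s => x5 (q s)) I t) * y5 (q t)
          + (derivWithin (fun s => y5 (q s)) I t) * x5 (q t)) / 2
    ∧ derivWithin (fun s => v5 (q s)) I t
      = (derivWithin (fun s => y5 (q s)) I t) * (x5 (q t) ^ 2 + y5 (q t) ^ 2) / 2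
    ∧ derivWithin (fun s => w5 (q s)) I t
      = -(derivWithin (fun s => x5 (q s)) I t) * (x5 (q t) ^ 2 + y5 (q t) ^ 2) / 2

/-- A curve is unit-speed on `I` if `x'(t)² + y'(t)² = 1` for almost every `t ∈ I`. -/
def CartanUnitSpeedOn (I : Set ℝ) (q : ℝ → P5) : Prop :=
  ∀ᵐ t ∂(volume.restrict I),
    (derivWithin (fun s => x5 (q s)) I t) ^ 2
      + (derivWithin (fun s => y5 (q s)) I t) ^ 2 = 1

/-- The sub-Riemannian length `∫₀ᵀ √(x'(t)² + y'(t)²) dt` of a curve `q : [0, T] → ℝ⁵`. -/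
def cartanLength (T : ℝ) (q : ℝ → P5) : ℝ :=
  ∫ t in Icc (0:ℝ) T,
    Real.sqrt ((derivWithin (fun s => x5 (q s)) (Icc 0 T) t) ^ 2
      + (derivWithin (fun s => y5 (q s)) (Icc 0 T) t) ^ 2)

/-- The sub-Riemannian (Carnot–Carathéodory) distance on the Cartan group: the infimum of
lengths of horizontal Lipschitz curves joining `p` to `q`. -/
def dCartan (p q : P5) : ℝ :=
  sInf { L : ℝ | ∃ T : ℝ, 0 ≤ T ∧ ∃ γ : ℝ → P5,
    CartanHorizOn (Icc 0 T) γ ∧ γ 0 = p ∧ γ T = q ∧ cartanLength T γ = L }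

/-- The rotation `R_η` of the Cartan group. -/
def rotC (η : ℝ) (p : P5) : P5 :=
  (x5 p * Real.cos η + y5 p * Real.sin η,
   y5 p * Real.cos η - x5 p * Real.sin η,
   z5 p,
   v5 p * Real.cos η + w5 p * Real.sin η,
   w5 p * Real.cos η - v5 p * Real.sin η)


/-- The rotation as a continuous linear map. -/
def rotL (η : ℝ) : P5 →L[ℝ] P5 :=
  letI X : P5 →L[ℝ] ℝ := ContinuousLinearMap.fst ℝ ℝ (ℝ × ℝ × ℝ × ℝ)
  letI S1 : P5 →L[ℝ] (ℝ × ℝ × ℝ × ℝ) := ContinuousLinearMap.snd ℝ ℝ (ℝ × ℝ × ℝ × ℝ)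
  letI Y : P5 →L[ℝ] ℝ := (ContinuousLinearMap.fst ℝ ℝ (ℝ × ℝ × ℝ)).comp S1
  letI S2 : P5 →L[ℝ] (ℝ × ℝ × ℝ) := (ContinuousLinearMap.snd ℝ ℝ (ℝ × ℝ × ℝ)).comp S1
  letI Z : P5 →L[ℝ] ℝ := (ContinuousLinearMap.fst ℝ ℝ (ℝ × ℝ)).comp S2
  letI S3 : P5 →L[ℝ] (ℝ × ℝ) := (ContinuousLinearMap.snd ℝ ℝ (ℝ × ℝ)).comp S2
  letI V : P5 →L[ℝ] ℝ := (ContinuousLinearMap.fst ℝ ℝ ℝ).comp S3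
  letI W : P5 →L[ℝ] ℝ := (ContinuousLinearMap.snd ℝ ℝ ℝ).comp S3
  (Real.cos η • X + Real.sin η • Y).prod
    ((Real.cos η • Y - Real.sin η • X).prod
      (Z.prod ((Real.cos η • V + Real.sin η • W).prod
        (Real.cos η • W - Real.sin η • V))))

lemma rotL_apply (η : ℝ) (p : P5) : rotL η p = rotC η p := by
  simp only [rotL, rotC, x5, y5, z5, v5, w5, ContinuousLinearMap.prod_apply,
    ContinuousLinearMap.add_apply, ContinuousLinearMap.sub_apply,
    ContinuousLinearMap.smul_apply, ContinuousLinearMap.comp_apply,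
    ContinuousLinearMap.coe_fst', ContinuousLinearMap.coe_snd', smul_eq_mul]
  refine Prod.ext (by ring) (Prod.ext (by ring) (Prod.ext rfl
    (Prod.ext (by ring) (by ring))))

lemma rotC_lip (η : ℝ) : LipschitzWith ‖rotL η‖₊ (rotC η) := by
  have : rotC η = ⇑(rotL η) := funext fun p => (rotL_apply η p).symm
  rw [this]; exact (rotL η).lipschitz

lemma rot_rot (η : ℝ) (p : P5) : rotC (-η) (rotC η p) = p := by
  have hcs := Real.sin_sq_add_cos_sq η
  obtain ⟨x, y, z, v, w⟩ := p
  simp only [rotC, x5, y5, z5, v5, w5, Real.cos_neg, Real.sin_neg]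
  refine Prod.ext (by dsimp; linear_combination x * hcs)
    (Prod.ext (by dsimp; linear_combination y * hcs) (Prod.ext rfl
    (Prod.ext (by dsimp; linear_combination v * hcs)
      (by dsimp; linear_combination w * hcs))))

lemma rot_horiz (η : ℝ) {T : ℝ} {γ : ℝ → P5} (h : CartanHorizOn (Icc 0 T) γ) :
    CartanHorizOn (Icc 0 T) (fun t => rotC η (γ t)) ∧
      cartanLength T (fun t => rotC η (γ t)) = cartanLength T γ := by
  obtain ⟨⟨K, hK⟩, hae⟩ := h
  set I : Set ℝ := Icc (0:ℝ) T with hI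
  set co := Real.cos η
  set si := Real.sin η
  have hcs : si ^ 2 + co ^ 2 = 1 := Real.sin_sq_add_cos_sq η
  have hIoo : ∀ᵐ t ∂(volume.restrict I), t ∈ Ioo (0:ℝ) T := by
    have h1 : ∀ᵐ t ∂(volume.restrict I), t ∈ I := ae_restrict_mem measurableSet_Icc
    have h2 : ∀ᵐ t ∂(volume.restrict I), t ≠ 0 ∧ t ≠ T := by
      refine ae_restrict_of_ae ?_
      rw [ae_iff]
      refine measure_mono_null ?_
        (((Set.finite_singleton T).insert (0:ℝ)).measure_zero _)
      intro t ht
      simp only [mem_setOf_eq, not_and_or, not_not] at ht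
      rcases ht with h | h <;> simp [h]
    filter_upwards [h1, h2] with t h1 h2
    exact ⟨lt_of_le_of_ne h1.1 (Ne.symm h2.1), lt_of_le_of_ne h1.2 h2.2⟩
  have hdiff : ∀ᵐ t ∂(volume.restrict I), DifferentiableWithinAt ℝ γ I t :=
    hK.ae_differentiableWithinAt measurableSet_Icc
  have key : ∀ᵐ t ∂(volume.restrict I),
      (derivWithin (fun s => z5 (rotC η (γ s))) I t
        = (-(derivWithin (fun s => x5 (rotC η (γ s))) I t) * y5 (rotC η (γ t))
            + (derivWithin (fun s => y5 (rotC η (γ s))) I t) * x5 (rotC η (γ t))) / 2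
      ∧ derivWithin (fun s => v5 (rotC η (γ s))) I t
        = (derivWithin (fun s => y5 (rotC η (γ s))) I t)
            * (x5 (rotC η (γ t)) ^ 2 + y5 (rotC η (γ t)) ^ 2) / 2
      ∧ derivWithin (fun s => w5 (rotC η (γ s))) I t
        = -(derivWithin (fun s => x5 (rotC η (γ s))) I t)
            * (x5 (rotC η (γ t)) ^ 2 + y5 (rotC η (γ t)) ^ 2) / 2)
      ∧ Real.sqrt ((derivWithin (fun s => x5 (rotC η (γ s))) I t) ^ 2
          + (derivWithin (fun s => y5 (rotC η (γ s))) I t) ^ 2)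
        = Real.sqrt ((derivWithin (fun s => x5 (γ s)) I t) ^ 2
          + (derivWithin (fun s => y5 (γ s)) I t) ^ 2) := by
    filter_upwards [hIoo, hdiff, hae] with t ht hd hhor
    have hT0 : (0:ℝ) < T := lt_trans ht.1 ht.2
    have hU : UniqueDiffWithinAt ℝ I t :=
      (uniqueDiffOn_Icc hT0) t (Ioo_subset_Icc_self ht)
    set X := derivWithin (fun s => x5 (γ s)) I t with hXdef
    set Y := derivWithin (fun s => y5 (γ s)) I t with hYdef
    set Z := derivWithin (fun s => z5 (γ s)) I t with hZdef
    set V := derivWithin (fun s => v5 (γ s)) I t with hVdef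
    set W := derivWithin (fun s => w5 (γ s)) I t with hWdef
    have hXd : HasDerivWithinAt (fun s => x5 (γ s)) X I t := hd.fst.hasDerivWithinAt
    have hYd : HasDerivWithinAt (fun s => y5 (γ s)) Y I t := hd.snd.fst.hasDerivWithinAt
    have hZd : HasDerivWithinAt (fun s => z5 (γ s)) Z I t :=
      hd.snd.snd.fst.hasDerivWithinAt
    have hVd : HasDerivWithinAt (fun s => v5 (γ s)) V I t :=
      hd.snd.snd.snd.fst.hasDerivWithinAt
    have hWd : HasDerivWithinAt (fun s => w5 (γ s)) W I t :=
      hd.snd.snd.snd.snd.hasDerivWithinAt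
    have hxnew : derivWithin (fun s => x5 (rotC η (γ s))) I t = X * co + Y * si :=
      ((hXd.mul_const co).add (hYd.mul_const si)).derivWithin hU
    have hynew : derivWithin (fun s => y5 (rotC η (γ s))) I t = Y * co - X * si :=
      ((hYd.mul_const co).sub (hXd.mul_const si)).derivWithin hU
    have hznew : derivWithin (fun s => z5 (rotC η (γ s))) I t = Z := hZd.derivWithin hU
    have hvnew : derivWithin (fun s => v5 (rotC η (γ s))) I t = V * co + W * si :=
      ((hVd.mul_const co).add (hWd.mul_const si)).derivWithin hU
    have hwnew : derivWithin (fun s => w5 (rotC η (γ s))) I t = W * co - V * si :=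
      ((hWd.mul_const co).sub (hVd.mul_const si)).derivWithin hU
    obtain ⟨hz, hv, hw⟩ := hhor
    set x := x5 (γ t)
    set y := y5 (γ t)
    have hxp : x5 (rotC η (γ t)) = x * co + y * si := rfl
    have hyp : y5 (rotC η (γ t)) = y * co - x * si := rfl
    rw [hxnew, hynew, hznew, hvnew, hwnew, hxp, hyp]
    refine ⟨⟨?_, ?_, ?_⟩, ?_⟩
    · linear_combination hz + ((X * y - Y * x) / 2) * hcs
    · linear_combination co * hv + si * hw
        - ((Y * co - X * si) * (x ^ 2 + y ^ 2) / 2) * hcs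
    · linear_combination co * hw - si * hv
        + ((X * co + Y * si) * (x ^ 2 + y ^ 2) / 2) * hcs
    · congr 1
      linear_combination (X ^ 2 + Y ^ 2) * hcs
  constructor
  · refine ⟨⟨‖rotL η‖₊ * K, (rotC_lip η).comp_lipschitzOnWith hK⟩, ?_⟩
    filter_upwards [key] with t hkey using hkey.1
  · refine integral_congr_ae ?_
    filter_upwards [key] with t hkey using hkey.2

lemma dCartan_set_subset (η : ℝ) (p q : P5) :
    { L : ℝ | ∃ T : ℝ, 0 ≤ T ∧ ∃ γ : ℝ → P5,
        CartanHorizOn (Icc 0 T) γ ∧ γ 0 = p ∧ γ T = q ∧ cartanLength T γ = L }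
    ⊆ { L : ℝ | ∃ T : ℝ, 0 ≤ T ∧ ∃ γ : ℝ → P5,
        CartanHorizOn (Icc 0 T) γ ∧ γ 0 = rotC η p ∧ γ T = rotC η q
          ∧ cartanLength T γ = L } := by
  rintro L ⟨T, hT, γ, hhor, h0, hT', hlen⟩
  obtain ⟨hhor', hlen'⟩ := rot_horiz η hhor
  exact ⟨T, hT, fun t => rotC η (γ t), hhor',
    by show rotC η (γ 0) = rotC η p; rw [h0],
    by show rotC η (γ T) = rotC η q; rw [hT'],
    by rw [hlen', hlen]⟩

lemma VC_rot (η : ℝ) (p : P5) : VC (rotC η p) = VC p := by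
  have hcs := Real.sin_sq_add_cos_sq η
  obtain ⟨x, y, z, v, w⟩ := p
  simp only [VC, rotC, x5, y5, z5, v5, w5]
  linear_combination (x * v + y * w - (x ^ 2 + y ^ 2) * z / 2) * hcs

/-- Every rotation `R_η` is an isometry of the sub-Riemannian distance `d_C` and preserves
the coordinate `z` and the function `V`. -/
theorem rotation_isometry (η : ℝ) :
    (∀ p q : P5, dCartan (rotC η p) (rotC η q) = dCartan p q) ∧
    (∀ p : P5, z5 (rotC η p) = z5 p) ∧
    (∀ p : P5, VC (rotC η p) = VC p) := by
  refine ⟨fun p q => ?_, fun p => rfl, fun p => VC_rot η p⟩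
  have h1 := dCartan_set_subset η p q
  have h2 := dCartan_set_subset (-η) (rotC η p) (rotC η q)
  rw [rot_rot η p, rot_rot η q] at h2
  unfold dCartan
  exact congrArg sInf (Set.Subset.antisymm h2 h1)
end
end
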